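/- For all real numbers α > 0, β > 0, k > 0 and 0 < p < q with k·p < 1 and k·q > 1, the improper integral ∫₀^∞ (α·z^p + β·z^q)^(−k) dz converges and equals Γ((1−k·p)/(q−p)) · Γ((k·q−1)/(q−p)) / (α^k · Γ(k) · (q−p)) · (α/β)^((1−k·p)/(q−p)). -/

import Mathlib

open MeasureTheory Real

lemma beta_real_aux {a b : ℝ} (ha : 0 < a) (hb : 0 < b) :
    IntegrableOn (fun x : ℝ => x ^ (a - 1) * (1 - x) ^ (b - 1)) (Set.Ioo 0 1) ∧
    ∫ x in Set.Ioo (0 : ℝ) 1, x ^ (a - 1) * (1 - x) ^ (b - 1) =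
      Real.Gamma a * Real.Gamma b / Real.Gamma (a + b) := by
  have heq : ∀ x ∈ Set.Icc (0 : ℝ) 1,
      ((x ^ (a - 1) * (1 - x) ^ (b - 1) : ℝ) : ℂ) =
        (x : ℂ) ^ ((a : ℂ) - 1) * (1 - (x : ℂ)) ^ ((b : ℂ) - 1) := by
    intro x hx
    rw [Complex.ofReal_mul, Complex.ofReal_cpow hx.1, Complex.ofReal_cpow (by linarith [hx.2])]
    push_cast
    ring_nf
  have hconv := Complex.betaIntegral_convergent (u := (a : ℂ)) (v := (b : ℂ))
    (by simpa using ha) (by simpa using hb)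
  -- integrability of the real integrand on Ioo 0 1
  have hIoc : IntegrableOn (fun x : ℝ => (x : ℂ) ^ ((a : ℂ) - 1) * (1 - (x : ℂ)) ^ ((b : ℂ) - 1))
      (Set.Ioc 0 1) := by
    rw [← intervalIntegrable_iff_integrableOn_Ioc_of_le zero_le_one]
    exact hconv
  have hIooC : IntegrableOn (fun x : ℝ => (x : ℂ) ^ ((a : ℂ) - 1) * (1 - (x : ℂ)) ^ ((b : ℂ) - 1))
      (Set.Ioo 0 1) := hIoc.mono_set Set.Ioo_subset_Ioc_self
  have hre : IntegrableOn
      (fun x : ℝ => ((x : ℂ) ^ ((a : ℂ) - 1) * (1 - (x : ℂ)) ^ ((b : ℂ) - 1)).re)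
      (Set.Ioo 0 1) := hIooC.re
  have hint : IntegrableOn (fun x : ℝ => x ^ (a - 1) * (1 - x) ^ (b - 1)) (Set.Ioo 0 1) := by
    refine hre.congr_fun ?_ measurableSet_Ioo
    intro x hx
    simp only [← heq x (Set.mem_Icc_of_Ioo hx), Complex.ofReal_re]
  refine ⟨hint, ?_⟩
  -- value
  have hbeta : Complex.betaIntegral (a : ℂ) (b : ℂ) =
      ((∫ x in Set.Ioo (0:ℝ) 1, x ^ (a - 1) * (1 - x) ^ (b - 1) : ℝ) : ℂ) := by
    rw [Complex.betaIntegral]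
    have hcg : (∫ x in (0:ℝ)..1, (x : ℂ) ^ ((a : ℂ) - 1) * (1 - (x : ℂ)) ^ ((b : ℂ) - 1)) =
        ∫ x in (0:ℝ)..1, ((x ^ (a - 1) * (1 - x) ^ (b - 1) : ℝ) : ℂ) := by
      refine intervalIntegral.integral_congr fun x hx => ?_
      rw [Set.uIcc_of_le zero_le_one] at hx
      exact (heq x hx).symm
    rw [hcg, intervalIntegral.integral_ofReal]
    norm_cast
    rw [intervalIntegral.integral_of_le zero_le_one, integral_Ioc_eq_integral_Ioo]
  have hG := Complex.Gamma_mul_Gamma_eq_betaIntegral (s := (a : ℂ)) (t := (b : ℂ))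
    (by simpa using ha) (by simpa using hb)
  rw [hbeta] at hG
  have : ((Real.Gamma a * Real.Gamma b : ℝ) : ℂ) =
      ((Real.Gamma (a + b) * ∫ x in Set.Ioo (0:ℝ) 1, x ^ (a - 1) * (1 - x) ^ (b - 1) : ℝ) : ℂ) := by
    push_cast
    rw [← Complex.Gamma_ofReal, ← Complex.Gamma_ofReal, ← Complex.Gamma_ofReal]
    push_cast
    exact hG
  have h2 := Complex.ofReal_injective this
  have hGpos : 0 < Real.Gamma (a + b) := Real.Gamma_pos_of_pos (by linarith)
  field_simp
  linarith [h2]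

/-- The settling-time integral: for `α, β, k > 0`, `0 < p < q`, `k*p < 1 < k*q`,
the improper integral `∫₀^∞ (α z^p + β z^q)^(-k) dz` converges and equals
`Γ((1-kp)/(q-p)) Γ((kq-1)/(q-p)) / (α^k Γ(k) (q-p)) · (α/β)^((1-kp)/(q-p))`. -/
theorem settling_time_integral
    (α β k p q : ℝ) (hα : 0 < α) (hβ : 0 < β) (hk : 0 < k)
    (hp : 0 < p) (hpq : p < q) (hkp : k * p < 1) (hkq : 1 < k * q) :
    IntegrableOn (fun z : ℝ => (α * z ^ p + β * z ^ q) ^ (-k)) (Set.Ioi 0) ∧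
    ∫ z in Set.Ioi (0 : ℝ), (α * z ^ p + β * z ^ q) ^ (-k) =
      Real.Gamma ((1 - k * p) / (q - p)) * Real.Gamma ((k * q - 1) / (q - p)) /
        (α ^ k * Real.Gamma k * (q - p)) * (α / β) ^ ((1 - k * p) / (q - p)) := by
  have hqp : 0 < q - p := sub_pos.mpr hpq
  set c : ℝ := α / β with hc
  have hcpos : 0 < c := div_pos hα hβ
  set r : ℝ := 1 / (q - p) with hr
  have hrpos : 0 < r := by positivity
  have hr1 : r * (q - p) = 1 := one_div_mul_cancel hqp.ne'
  set a : ℝ := (1 - k * p) / (q - p) with ha'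
  set b : ℝ := (k * q - 1) / (q - p) with hb'
  have ha : 0 < a := div_pos (by linarith) hqp
  have hb : 0 < b := div_pos (by linarith) hqp
  have ha2 : r * (1 - k * p) = a := by rw [ha', hr]; ring
  have hb2 : a + b = k := by rw [ha', hb']; field_simp; ring
  set F : ℝ → ℝ := fun x => (c * x / (1 - x)) ^ r with hF
  set F' : ℝ → ℝ := fun x => r * (c * x / (1 - x)) ^ (r - 1) * (c / (1 - x) ^ 2) with hF'
  -- derivative
  have hderiv : ∀ x ∈ Set.Ioo (0:ℝ) 1, HasDerivWithinAt F (F' x) (Set.Ioo 0 1) x := by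
    intro x hx
    have hx1 : (0:ℝ) < 1 - x := by linarith [hx.2]
    have hw : 0 < c * x / (1 - x) := div_pos (mul_pos hcpos hx.1) hx1
    have h1 : HasDerivAt (fun y : ℝ => c * y / (1 - y)) (c / (1 - x) ^ 2) x := by
      have h1a : HasDerivAt (fun y : ℝ => c * y) c x := by
        simpa using (hasDerivAt_id x).const_mul c
      have h1b : HasDerivAt (fun y : ℝ => 1 - y) (-1) x := by
        simpa using (hasDerivAt_id x).const_sub 1
      have := h1a.div h1b hx1.ne'
      rw [show c / (1 - x) ^ 2 = (c * (1 - x) - c * x * -1) / (1 - x) ^ 2 by ring]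
      exact this
    have h2 : HasDerivAt (fun y : ℝ => y ^ r) (r * (c * x / (1 - x)) ^ (r - 1))
        (c * x / (1 - x)) := Real.hasDerivAt_rpow_const (Or.inl hw.ne')
    exact (h2.comp x h1).hasDerivWithinAt
  -- injectivity
  have hinj : Set.InjOn F (Set.Ioo 0 1) := by
    have hmono : StrictMonoOn F (Set.Ioo 0 1) := by
      intro x hx y hy hxy
      have hx1 : (0:ℝ) < 1 - x := by linarith [hx.2]
      have hy1 : (0:ℝ) < 1 - y := by linarith [hy.2]
      have hwx : 0 ≤ c * x / (1 - x) := le_of_lt (div_pos (mul_pos hcpos hx.1) hx1)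
      have : c * x / (1 - x) < c * y / (1 - y) := by
        rw [div_lt_div_iff₀ hx1 hy1]
        nlinarith
      exact Real.rpow_lt_rpow hwx this hrpos
    exact hmono.injOn
  -- image
  have himg : F '' Set.Ioo 0 1 = Set.Ioi 0 := by
    ext z
    constructor
    · rintro ⟨x, hx, rfl⟩
      have hx1 : (0:ℝ) < 1 - x := by linarith [hx.2]
      exact Real.rpow_pos_of_pos (div_pos (mul_pos hcpos hx.1) hx1) r
    · intro hz
      rw [Set.mem_Ioi] at hz
      set t : ℝ := z ^ (q - p) with ht'
      have ht : 0 < t := Real.rpow_pos_of_pos hz _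
      refine ⟨t / (c + t), ⟨div_pos ht (by positivity),
        (div_lt_one (by positivity)).mpr (by linarith)⟩, ?_⟩
      have h1 : c * (t / (c + t)) / (1 - t / (c + t)) = t := by
        have hct : c + t ≠ 0 := by positivity
        field_simp
        rw [add_sub_cancel_right, div_self hcpos.ne']
      show (c * (t / (c + t)) / (1 - t / (c + t))) ^ r = z
      rw [h1, ht', ← Real.rpow_mul hz.le]
      rw [show (q - p) * r = 1 by rw [mul_comm]; exact hr1, Real.rpow_one]
  -- pointwise identity
  have hpoint : ∀ x ∈ Set.Ioo (0:ℝ) 1,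
      |F' x| * ((α * (F x) ^ p + β * (F x) ^ q) ^ (-k)) =
        (r * c ^ a * α ^ (-k)) * (x ^ (a - 1) * (1 - x) ^ (b - 1)) := by
    intro x hx
    obtain ⟨hx0, hx2⟩ := hx
    have hx1 : (0:ℝ) < 1 - x := by linarith
    have hw : 0 < c * x / (1 - x) := div_pos (mul_pos hcpos hx0) hx1
    have hFx : F x = (c * x / (1 - x)) ^ r := rfl
    have hrq : r * q = r * p + 1 := by linear_combination hr1
    have hsum : α * (F x) ^ p + β * (F x) ^ q =
        (c * x / (1 - x)) ^ (r * p) * (α / (1 - x)) := by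
      rw [hFx, ← Real.rpow_mul hw.le, ← Real.rpow_mul hw.le, hrq, Real.rpow_add hw,
        Real.rpow_one]
      have hβw : β * (c * x / (1 - x)) = α * x / (1 - x) := by
        rw [hc]; field_simp
      rw [mul_comm ((c * x / (1 - x)) ^ (r * p)) (c * x / (1 - x)), ← mul_assoc, hβw]
      field_simp
      ring
    have hF'x : F' x = r * (c * x / (1 - x)) ^ (r - 1) * (c / (1 - x) ^ 2) := rfl
    have hF'pos : 0 < F' x := by
      rw [hF'x]; positivity
    rw [abs_of_pos hF'pos, hsum, hF'x]
    -- now prove by logs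
    have hL : (0:ℝ) < r * (c * x / (1 - x)) ^ (r - 1) * (c / (1 - x) ^ 2) *
        (((c * x / (1 - x)) ^ (r * p) * (α / (1 - x))) ^ (-k)) := by positivity
    have hR : (0:ℝ) < (r * c ^ a * α ^ (-k)) * (x ^ (a - 1) * (1 - x) ^ (b - 1)) := by
      positivity
    refine Real.log_injOn_pos (Set.mem_Ioi.mpr hL) (Set.mem_Ioi.mpr hR) ?_
    have lw : Real.log (c * x / (1 - x)) = Real.log c + Real.log x - Real.log (1 - x) := by
      rw [Real.log_div (by positivity) hx1.ne', Real.log_mul hcpos.ne' hx0.ne']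
    have lX : Real.log (((c * x / (1 - x)) ^ (r * p) * (α / (1 - x))) ^ (-k)) =
        (-k) * ((r * p) * (Real.log c + Real.log x - Real.log (1 - x)) +
          (Real.log α - Real.log (1 - x))) := by
      rw [Real.log_rpow (by positivity), Real.log_mul (by positivity) (by positivity),
        Real.log_rpow hw, Real.log_div hα.ne' hx1.ne', lw]
    have l2 : Real.log (c / (1 - x) ^ 2) = Real.log c - 2 * Real.log (1 - x) := by
      rw [Real.log_div hcpos.ne' (by positivity), Real.log_pow]
      push_cast; ring
    have l3 : Real.log (x ^ (a - 1) * (1 - x) ^ (b - 1)) =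
        (a - 1) * Real.log x + (b - 1) * Real.log (1 - x) := by
      rw [Real.log_mul (by positivity) (by positivity), Real.log_rpow hx0, Real.log_rpow hx1]
    have lL : Real.log (r * (c * x / (1 - x)) ^ (r - 1) * (c / (1 - x) ^ 2) *
        (((c * x / (1 - x)) ^ (r * p) * (α / (1 - x))) ^ (-k))) =
        Real.log r + (r - 1) * (Real.log c + Real.log x - Real.log (1 - x)) +
          (Real.log c - 2 * Real.log (1 - x)) +
          (-k) * ((r * p) * (Real.log c + Real.log x - Real.log (1 - x)) +
            (Real.log α - Real.log (1 - x))) := by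
      rw [Real.log_mul (by positivity) (by positivity),
        Real.log_mul (by positivity) (by positivity),
        Real.log_mul (by positivity) (by positivity),
        Real.log_rpow hw, lw, lX, l2]
    have lR : Real.log ((r * c ^ a * α ^ (-k)) * (x ^ (a - 1) * (1 - x) ^ (b - 1))) =
        Real.log r + a * Real.log c + (-k) * Real.log α +
          ((a - 1) * Real.log x + (b - 1) * Real.log (1 - x)) := by
      rw [Real.log_mul (by positivity) (by positivity),
        Real.log_mul (by positivity) (by positivity),
        Real.log_mul (by positivity) (by positivity),
        Real.log_rpow hcpos, Real.log_rpow hα, l3]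
    rw [lL, lR]
    linear_combination (Real.log x + Real.log c - Real.log (1 - x)) * ha2 -
      Real.log (1 - x) * hb2
  -- main change of variables
  have keyInt := integrableOn_image_iff_integrableOn_abs_deriv_smul measurableSet_Ioo
    hderiv hinj (fun z : ℝ => (α * z ^ p + β * z ^ q) ^ (-k))
  have keyVal := integral_image_eq_integral_abs_deriv_smul measurableSet_Ioo
    hderiv hinj (fun z : ℝ => (α * z ^ p + β * z ^ q) ^ (-k))
  rw [himg] at keyInt keyVal
  -- beta facts
  obtain ⟨hbint, hbval⟩ := beta_real_aux ha hb
  have heqOn : ∀ x ∈ Set.Ioo (0:ℝ) 1,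
      |F' x| • ((α * (F x) ^ p + β * (F x) ^ q) ^ (-k)) =
        (r * c ^ a * α ^ (-k)) * (x ^ (a - 1) * (1 - x) ^ (b - 1)) := by
    intro x hx
    rw [smul_eq_mul]
    exact hpoint x hx
  have h5 : IntegrableOn
      (fun x : ℝ => (r * c ^ a * α ^ (-k)) * (x ^ (a - 1) * (1 - x) ^ (b - 1)))
      (Set.Ioo 0 1) := hbint.const_mul _
  constructor
  · rw [keyInt]
    refine h5.congr_fun ?_ measurableSet_Ioo
    intro x hx
    exact (heqOn x hx).symm
  · rw [keyVal]
    rw [setIntegral_congr_fun measurableSet_Ioo heqOn]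
    rw [MeasureTheory.integral_const_mul, hbval, hb2]
    have hGk : (0:ℝ) < Real.Gamma k := Real.Gamma_pos_of_pos hk
    have hαk : (0:ℝ) < α ^ k := Real.rpow_pos_of_pos hα k
    rw [Real.rpow_neg hα.le, hr]
    field_simp
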